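/- For every real number a > 0 and every ξ ∈ ℝ, the integral over s ∈ (0,∞) of 𝓕g_a(√s · ξ) · s^{a + 1/2} · e^{-s/4} ds equals 2√π · 4^{a+1} · Γ(a+1) · e^{-4π²ξ²}. -/

import Mathlib

open MeasureTheory Real

lemma max_rpow_zero' {a x : ℝ} (ha : 0 < a) (hx : x ≤ 0) : (max x 0) ^ a = 0 := by
  rw [max_eq_right hx, Real.zero_rpow ha.ne']

lemma outside_sqrt {s t : ℝ} (hs : 0 ≤ s) (ht : t ∉ Set.Icc (-Real.sqrt s) (Real.sqrt s)) :
    s ≤ t ^ 2 := by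
  rw [Set.mem_Icc, not_and_or] at ht
  have h2 := Real.sq_sqrt hs
  have hn := Real.sqrt_nonneg s
  rcases ht with h | h <;> push_neg at h <;>
    nlinarith [sq_nonneg (t + Real.sqrt s), sq_nonneg (t - Real.sqrt s)]

lemma lemA {a : ℝ} (ha : 0 < a) (ξ s : ℝ) (hs : 0 < s) :
    FourierTransform.fourier (fun t : ℝ => (((max (1 - t ^ 2) 0) ^ a : ℝ) : ℂ)) (Real.sqrt s * ξ)
        * ((s ^ (a + 1 / 2) : ℝ) : ℂ)
      = ∫ t : ℝ, Complex.exp ((-2 * π * t * ξ : ℝ) * Complex.I)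
          * (((max (s - t ^ 2) 0) ^ a : ℝ) : ℂ) := by
  have hsq : (0:ℝ) < Real.sqrt s := Real.sqrt_pos.mpr hs
  set G : ℝ → ℂ := fun t => Complex.exp ((-2 * π * t * ξ : ℝ) * Complex.I)
      * (((max (s - t ^ 2) 0) ^ a : ℝ) : ℂ) with hG
  have key : (∫ x : ℝ, G (Real.sqrt s * x)) = |(Real.sqrt s)⁻¹| • ∫ y, G y :=
    MeasureTheory.Measure.integral_comp_mul_left G (Real.sqrt s)
  have hcomp : ∀ x : ℝ, G (Real.sqrt s * x)
      = ((s ^ a : ℝ) : ℂ) * (Complex.exp ((-2 * π * x * (Real.sqrt s * ξ) : ℝ) * Complex.I)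
          * (((max (1 - x ^ 2) 0) ^ a : ℝ) : ℂ)) := by
    intro x
    have h1 : s - (Real.sqrt s * x) ^ 2 = s * (1 - x ^ 2) := by
      rw [mul_pow, Real.sq_sqrt hs.le]; ring
    have h2 : max (s - (Real.sqrt s * x) ^ 2) 0 = s * max (1 - x ^ 2) 0 := by
      rw [h1, mul_max_of_nonneg _ _ hs.le, mul_zero]
    have h3 : (max (s - (Real.sqrt s * x) ^ 2) 0) ^ a = s ^ a * (max (1 - x ^ 2) 0) ^ a := by
      rw [h2, Real.mul_rpow hs.le (le_max_right _ _)]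
    have h4 : -2 * π * (Real.sqrt s * x) * ξ = -2 * π * x * (Real.sqrt s * ξ) := by ring
    simp only [hG, h3, h4]
    push_cast
    ring
  rw [Real.fourier_real_eq_integral_exp_smul]
  have : (∫ y, G y) = Real.sqrt s • ∫ x : ℝ, G (Real.sqrt s * x) := by
    rw [key, smul_smul, abs_of_pos (inv_pos.mpr hsq), mul_inv_cancel₀ hsq.ne', one_smul]
  rw [this]
  simp only [hcomp]
  rw [integral_const_mul]
  have hpow : Real.sqrt s * s ^ a = s ^ (a + 1 / 2) := by
    rw [Real.rpow_add hs, Real.sqrt_eq_rpow]; ring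
  simp only [smul_eq_mul, Complex.real_smul]
  rw [← hpow]
  push_cast
  ring

lemma lemB {a : ℝ} (ha : 0 < a) (t : ℝ) :
    ∫ s in Set.Ioi (0:ℝ), (max (s - t ^ 2) 0) ^ a * Real.exp (-s / 4)
      = 4 ^ (a + 1) * Real.Gamma (a + 1) * Real.exp (-t ^ 2 / 4) := by
  set f : ℝ → ℝ := fun s => (max (s - t ^ 2) 0) ^ a * Real.exp (-s / 4) with hf
  have hzero : ∀ s : ℝ, s ≤ t ^ 2 → f s = 0 := fun s hs => by
    simp [hf, max_rpow_zero' ha (by linarith : s - t ^ 2 ≤ 0)]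
  have h1 : ∫ s in Set.Ioi (0:ℝ), f s = ∫ s in Set.Ioi (t ^ 2), f s := by
    have e1 : ∫ s in Set.Ioi (0:ℝ), f s = ∫ s, f s :=
      setIntegral_eq_integral_of_forall_compl_eq_zero
        (fun s hs => hzero s (by
          have hs' : ¬ (0 < s) := hs; have := sq_nonneg t; push_neg at hs'; linarith))
    have e2 : ∫ s in Set.Ioi (t ^ 2), f s = ∫ s, f s :=
      setIntegral_eq_integral_of_forall_compl_eq_zero
        (fun s hs => hzero s (by have hs' : ¬ (t ^ 2 < s) := hs; push_neg at hs'; exact hs'))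
    rw [e1, e2]
  have h2 : ∫ s in Set.Ioi (t ^ 2), f s = ∫ u in Set.Ioi (0:ℝ), f (u + t ^ 2) := by
    rw [← (measurePreserving_add_right volume (t ^ 2)).setIntegral_preimage_emb
        (measurableEmbedding_addRight _) f (Set.Ioi (t ^ 2))]
    congr 1
    ext u
    simp [Set.mem_Ioi]
  have h3 : ∫ u in Set.Ioi (0:ℝ), f (u + t ^ 2)
      = Real.exp (-t ^ 2 / 4) * ∫ u in Set.Ioi (0:ℝ), u ^ a * Real.exp (-(1/4 * u)) := by
    rw [← integral_const_mul]
    refine setIntegral_congr_fun measurableSet_Ioi (fun u hu => ?_)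
    have hu' : (0:ℝ) < u := hu
    simp only [hf]
    rw [max_eq_left (by linarith : (0:ℝ) ≤ u + t ^ 2 - t ^ 2 ), add_sub_cancel_right,
      show -(u + t ^ 2)/4 = -(1/4 * u) + -t ^ 2/4 by ring, Real.exp_add]
    ring
  have h4 : ∫ u in Set.Ioi (0:ℝ), u ^ a * Real.exp (-(1/4 * u))
      = 4 ^ (a + 1) * Real.Gamma (a + 1) := by
    have := Real.integral_rpow_mul_exp_neg_mul_Ioi
      (by linarith : (0:ℝ) < a + 1) (by norm_num : (0:ℝ) < 1/4)
    simp only [add_sub_cancel_right] at this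
    rw [this]
    norm_num
  rw [h1, h2, h3, h4]; ring

lemma integrable_kernel {a : ℝ} (ha : 0 < a) (ξ : ℝ) :
    Integrable (Function.uncurry fun s t : ℝ =>
        Complex.exp ((-2 * π * t * ξ : ℝ) * Complex.I) *
          (((max (s - t ^ 2) 0) ^ a * Real.exp (-s / 4) : ℝ) : ℂ))
      ((volume.restrict (Set.Ioi 0)).prod volume) := by
  set F : ℝ × ℝ → ℂ := fun p =>
      Complex.exp ((-2 * π * p.2 * ξ : ℝ) * Complex.I) *
        (((max (p.1 - p.2 ^ 2) 0) ^ a * Real.exp (-p.1 / 4) : ℝ) : ℂ) with hF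
  have hcont : Continuous F := by
    apply Continuous.mul
    · exact Complex.continuous_exp.comp
        ((Complex.continuous_ofReal.comp (by fun_prop)).mul continuous_const)
    · apply Complex.continuous_ofReal.comp
      apply Continuous.mul
      · exact ((continuous_fst.sub (continuous_snd.pow 2)).max continuous_const).rpow_const
          (fun p => Or.inr ha.le)
      · exact Real.continuous_exp.comp (by fun_prop)
  have hnorm : ∀ p : ℝ × ℝ, ‖F p‖ = (max (p.1 - p.2 ^ 2) 0) ^ a * Real.exp (-p.1 / 4) := by
    intro p
    rw [hF]
    simp only [norm_mul, Complex.norm_exp_ofReal_mul_I, one_mul]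
    rw [Complex.norm_real, Real.norm_eq_abs, abs_of_nonneg]
    positivity
  have hzero : ∀ s t : ℝ, s ≤ t ^ 2 → F (s, t) = 0 := by
    intro s t h
    simp [hF, max_rpow_zero' ha (by linarith : s - t ^ 2 ≤ 0)]
  rw [show (Function.uncurry fun s t : ℝ =>
        Complex.exp ((-2 * π * t * ξ : ℝ) * Complex.I) *
          (((max (s - t ^ 2) 0) ^ a * Real.exp (-s / 4) : ℝ) : ℂ)) = F from rfl]
  rw [integrable_prod_iff hcont.aestronglyMeasurable]
  constructor
  · filter_upwards [self_mem_ae_restrict measurableSet_Ioi] with s hs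
    have hsupp : ∀ t : ℝ, t ∉ Set.Icc (-Real.sqrt s) (Real.sqrt s) → F (s, t) = 0 :=
      fun t ht => hzero s t (outside_sqrt (le_of_lt hs) ht)
    exact (hcont.comp (continuous_const.prodMk continuous_id)).integrable_of_hasCompactSupport
      (HasCompactSupport.intro isCompact_Icc hsupp)
  · have hbound : ∀ s ∈ Set.Ioi (0:ℝ),
        (∫ t : ℝ, ‖F (s, t)‖) ≤ 2 * (s ^ (a + 1/2) * Real.exp (-(1/4) * s)) := by
      intro s hs
      have hs' : (0:ℝ) < s := hs
      have hind : ∀ t : ℝ, ‖F (s, t)‖ ≤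
          Set.indicator (Set.Icc (-Real.sqrt s) (Real.sqrt s))
            (fun _ => s ^ a * Real.exp (-s / 4)) t := by
        intro t
        by_cases ht : t ∈ Set.Icc (-Real.sqrt s) (Real.sqrt s)
        · rw [Set.indicator_of_mem ht, hnorm]
          apply mul_le_mul_of_nonneg_right _ (Real.exp_nonneg _)
          exact Real.rpow_le_rpow (le_max_right _ _)
            (max_le (by nlinarith [sq_nonneg t]) hs'.le) ha.le
        · rw [Set.indicator_of_notMem ht, hnorm]
          have h3 : s - t ^ 2 ≤ 0 := by linarith [outside_sqrt hs'.le ht]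
          rw [max_rpow_zero' ha h3, zero_mul]
      calc (∫ t : ℝ, ‖F (s, t)‖)
          ≤ ∫ t : ℝ, Set.indicator (Set.Icc (-Real.sqrt s) (Real.sqrt s))
              (fun _ => s ^ a * Real.exp (-s / 4)) t := by
            refine integral_mono_of_nonneg (Filter.Eventually.of_forall fun t => norm_nonneg _)
              ((integrable_indicator_iff measurableSet_Icc).mpr ?_)
              (Filter.Eventually.of_forall hind)
            exact (integrableOn_const measure_Icc_lt_top.ne)
        _ = 2 * (s ^ (a + 1/2) * Real.exp (-(1/4) * s)) := by
            rw [integral_indicator_const _ measurableSet_Icc]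
            rw [measureReal_def, Real.volume_Icc, smul_eq_mul]
            rw [ENNReal.toReal_ofReal
              (by have := Real.sqrt_nonneg s; linarith : (0:ℝ) ≤ Real.sqrt s - -Real.sqrt s)]
            rw [show Real.sqrt s - -Real.sqrt s = 2 * Real.sqrt s by ring]
            rw [Real.sqrt_eq_rpow, Real.rpow_add hs', show -s/4 = -(1/4)*s by ring]
            ring
    have hgint : IntegrableOn (fun s : ℝ => 2 * (s ^ (a + 1/2) * Real.exp (-(1/4) * s)))
        (Set.Ioi 0) volume := by
      have := integrableOn_rpow_mul_exp_neg_mul_rpow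
        (by linarith : (-1:ℝ) < a + 1/2) (one_pos) (by norm_num : (0:ℝ) < 1/4)
      simpa only [Real.rpow_one, IntegrableOn] using this.const_mul 2
    refine Integrable.mono hgint
      (hcont.norm.aestronglyMeasurable.integral_prod_right') ?_
    filter_upwards [self_mem_ae_restrict measurableSet_Ioi] with s hs
    have h1 : (0:ℝ) ≤ ∫ t : ℝ, ‖F (s, t)‖ :=
      integral_nonneg fun t => norm_nonneg _
    rw [Real.norm_eq_abs, abs_of_nonneg h1, Real.norm_eq_abs]
    exact le_trans (hbound s hs) (le_abs_self _)

/-- Fourier transform of the subordination identity: for `a > 0` and `ξ ∈ ℝ`,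
`∫₀^∞ 𝓕g_a(√s ξ) s^{a+1/2} e^{-s/4} ds = 2√π 4^{a+1} Γ(a+1) e^{-4π²ξ²}`,
where `g_a(t) = (max (1 - t²) 0)^a`. -/
theorem fourier_subordination_identity (a : ℝ) (ha : 0 < a) (ξ : ℝ) :
    ∫ s in Set.Ioi (0 : ℝ),
        FourierTransform.fourier (fun t : ℝ => (((max (1 - t ^ 2) 0) ^ a : ℝ) : ℂ))
            (Real.sqrt s * ξ)
          * ((s ^ (a + 1 / 2) : ℝ) : ℂ) * Complex.exp (-(s : ℂ) / 4)
      = ((2 * Real.sqrt π * 4 ^ (a + 1) * Real.Gamma (a + 1)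
          * Real.exp (-4 * π ^ 2 * ξ ^ 2) : ℝ) : ℂ) := by
  have step1 : ∀ s ∈ Set.Ioi (0:ℝ),
      FourierTransform.fourier (fun t : ℝ => (((max (1 - t ^ 2) 0) ^ a : ℝ) : ℂ)) (Real.sqrt s * ξ)
          * ((s ^ (a + 1 / 2) : ℝ) : ℂ) * Complex.exp (-(s : ℂ) / 4)
        = ∫ t : ℝ, Complex.exp ((-2 * π * t * ξ : ℝ) * Complex.I)
            * (((max (s - t ^ 2) 0) ^ a * Real.exp (-s / 4) : ℝ) : ℂ) := by
    intro s hs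
    rw [lemA ha ξ s hs]
    rw [show -(s:ℂ)/4 = ((-s/4 : ℝ) : ℂ) by push_cast; ring, ← Complex.ofReal_exp]
    rw [← integral_mul_const]
    congr 1; ext t; push_cast; ring
  rw [setIntegral_congr_fun measurableSet_Ioi step1]
  rw [MeasureTheory.integral_integral_swap (integrable_kernel ha ξ)]
  have step3 : ∀ t : ℝ,
      (∫ s in Set.Ioi (0:ℝ), Complex.exp ((-2 * π * t * ξ : ℝ) * Complex.I)
          * (((max (s - t ^ 2) 0) ^ a * Real.exp (-s / 4) : ℝ) : ℂ))
        = ((4 ^ (a+1) * Real.Gamma (a+1) : ℝ) : ℂ) *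
            (Complex.exp ((-2 * π * t * ξ : ℝ) * Complex.I)
              * ((Real.exp (-t^2/4) : ℝ) : ℂ)) := by
    intro t
    rw [integral_const_mul]
    have hre : (∫ s in Set.Ioi (0:ℝ), (((max (s - t ^ 2) 0) ^ a * Real.exp (-s / 4) : ℝ) : ℂ))
        = ((4 ^ (a+1) * Real.Gamma (a+1) * Real.exp (-t^2/4) : ℝ) : ℂ) := by
      rw [← lemB ha t]
      exact integral_ofReal
    rw [hre]
    push_cast; ring
  simp only [step3]
  rw [integral_const_mul]
  have heq : ∀ t : ℝ, Complex.exp ((-2 * π * t * ξ : ℝ) * Complex.I)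
      * ((Real.exp (-t^2/4) : ℝ) : ℂ)
      = Complex.exp (Complex.I * ((-2) * π * ξ) * t) * Complex.exp (-(1/4:ℂ) * (t:ℂ)^2) := by
    intro t
    rw [Complex.ofReal_exp, ← Complex.exp_add, ← Complex.exp_add]
    congr 1
    push_cast; ring
  have hgauss := fourierIntegral_gaussian (b := (1/4 : ℂ))
    (by norm_num : (0:ℝ) < ((1/4 : ℂ)).re) (((-2) * π * ξ : ℂ))
  have hc : ((π:ℂ) / (1/4)) ^ (1/2 : ℂ) = ((2 * Real.sqrt π : ℝ) : ℂ) := by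
    have h1 : ((π:ℂ) / (1/4)) = (((4:ℝ) * π : ℝ) : ℂ) := by push_cast; ring
    rw [h1, show (1/2 : ℂ) = ((1/2 : ℝ) : ℂ) by norm_num,
      ← Complex.ofReal_cpow (by positivity)]
    norm_cast
    rw [← Real.sqrt_eq_rpow, show (4:ℝ) * π = 2^2 * π by norm_num,
      Real.sqrt_mul (by positivity) π, Real.sqrt_sq (by norm_num : (0:ℝ) ≤ 2)]
  have hexp : -(((-2) * ↑π * ↑ξ : ℂ))^2 / (4 * (1/4)) = ((-4 * π^2 * ξ^2 : ℝ) : ℂ) := by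
    push_cast; ring
  simp only [heq]
  rw [hgauss, hc, hexp, ← Complex.ofReal_exp]
  push_cast
  ring
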